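/- Let p be a prime and r ≥ 1 a natural number. Let ξ be an element of the finite field F_{p^r} whose minimal polynomial over F_p has degree r (so that 1, ξ, ..., ξ^{r-1} form an F_p-basis of F_{p^r}). Let A ∈ M_r(F_p) be the matrix representing the F_p-linear map m_ξ : F_{p^r} → F_{p^r}, x ↦ ξx, with respect to the basis {1, ξ, ..., ξ^{r-1}}, and let A' ∈ M_r(F_{p^r}) be A with its entries viewed in F_{p^r}. Then there exists a column vector S₁ ∈ F_{p^r}^r such that the r×r matrix S whose i-th column (for 0 ≤ i ≤ r−1) is obtained by applying the Frobenius σ : x ↦ x^p entrywise i times to S₁ is invertible over F_{p^r}, and S⁻¹ A' S = diag(ξ, ξ^p, ξ^{p^2}, ..., ξ^{p^{r-1}}). -/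

import Mathlib

open Matrix Polynomial IntermediateField

lemma frob_fix_false (p r : ℕ) [Fact p.Prime] (hr : 1 ≤ r) (ξ : GaloisField p r)
    (hξ : (minpoly (ZMod p) ξ).natDegree = r) (d : ℕ) (hd0 : 0 < d) (hdr : d < r)
    (hfix : ξ ^ p ^ d = ξ) : False := by
  have hp1 : 1 < p := (Fact.out : p.Prime).one_lt
  have hint : IsIntegral (ZMod p) ξ := IsIntegral.of_finite _ _
  have hfr : Module.finrank (ZMod p) (GaloisField p r) = r := GaloisField.finrank p (by omega)
  have hsub : ((ZMod p)⟮ξ⟯).toSubalgebra = Algebra.adjoin (ZMod p) {ξ} :=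
    IntermediateField.adjoin_simple_toSubalgebra_of_isAlgebraic hint.isAlgebraic
  have hfrS : Module.finrank (ZMod p) (Algebra.adjoin (ZMod p) {ξ}) = r := by
    rw [← hsub, IntermediateField.finrank_eq_finrank_subalgebra,
      IntermediateField.adjoin.finrank hint, hξ]
  have hadj : Algebra.adjoin (ZMod p) {ξ} = ⊤ := by
    rw [← Algebra.toSubmodule_eq_top]
    exact Submodule.eq_top_of_finrank_eq
      (by rw [Subalgebra.finrank_toSubmodule, hfrS, hfr])
  let φ : GaloisField p r →ₐ[ZMod p] GaloisField p r :=
    { iterateFrobenius (GaloisField p r) p d with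
      commutes' := fun c => by
        simp [iterateFrobenius_def, ← map_pow, ZMod.pow_card_pow] }
  have hφ : φ = AlgHom.id (ZMod p) (GaloisField p r) := by
    apply AlgHom.ext_of_adjoin_eq_top hadj
    intro x hx
    simp only [Set.mem_singleton_iff] at hx
    subst hx
    simpa [φ, iterateFrobenius_def] using hfix
  have hall : ∀ x : GaloisField p r, x ^ p ^ d = x := fun x => by
    simpa [φ, iterateFrobenius_def] using AlgHom.congr_fun hφ x
  haveI : Fintype (GaloisField p r) := Fintype.ofFinite _
  haveI : DecidableEq (GaloisField p r) := Classical.decEq _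
  have hcard : Fintype.card (GaloisField p r) = p ^ r := by
    rw [← Nat.card_eq_fintype_card]; exact GaloisField.card p r (by omega)
  have hpoly : (X ^ p ^ d - X : (GaloisField p r)[X]) ≠ 0 :=
    FiniteField.X_pow_card_pow_sub_X_ne_zero _ (by omega) hp1
  have hroots : ∀ x : GaloisField p r, x ∈ (X ^ p ^ d - X : (GaloisField p r)[X]).roots := by
    intro x
    rw [Polynomial.mem_roots hpoly]
    simp [hall x]
  have hle : (Fintype.card (GaloisField p r) : ℕ) ≤ p ^ d := by
    calc Fintype.card (GaloisField p r)
        = Finset.univ.card := rfl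
      _ ≤ (X ^ p ^ d - X : (GaloisField p r)[X]).roots.toFinset.card :=
          Finset.card_le_card (fun x _ => Multiset.mem_toFinset.mpr (hroots x))
      _ ≤ Multiset.card (X ^ p ^ d - X : (GaloisField p r)[X]).roots :=
          Multiset.toFinset_card_le _
      _ ≤ (X ^ p ^ d - X : (GaloisField p r)[X]).natDegree := Polynomial.card_roots' _
      _ = p ^ d := FiniteField.X_pow_card_pow_sub_X_natDegree_eq _ (by omega) hp1
  rw [hcard] at hle
  exact absurd hle (by exact not_le.mpr (Nat.pow_lt_pow_right hp1 hdr))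

/-- **Lemma 3.6.** Let `ξ` generate `F_{p^r}` over `F_p` (its minimal polynomial has
degree `r`), and let `A` be the matrix of multiplication by `ξ` in the `F_p`-basis
`{1, ξ, …, ξ^{r-1}}`.  Then there is a vector `S₁` over `F_{p^r}` such that the matrix `S`
whose `i`-th column is the `i`-th entrywise Frobenius power of `S₁` is invertible and
conjugates `A` (viewed over `F_{p^r}`) to `diag(ξ, ξ^p, …, ξ^{p^{r-1}})`. -/
theorem stmt_0 (p r : ℕ) [Fact p.Prime] (hr : 1 ≤ r)
    (ξ : GaloisField p r)
    (hξ : (minpoly (ZMod p) ξ).natDegree = r)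
    (A : Matrix (Fin r) (Fin r) (ZMod p))
    (hA : ∀ j : Fin r, ξ * ξ ^ (j : ℕ) =
      ∑ i : Fin r, algebraMap (ZMod p) (GaloisField p r) (A i j) * ξ ^ (i : ℕ)) :
    ∃ S₁ : Fin r → GaloisField p r,
      IsUnit (Matrix.of fun k i : Fin r => (S₁ k) ^ p ^ (i : ℕ)) ∧
      (Matrix.of fun k i : Fin r => (S₁ k) ^ p ^ (i : ℕ))⁻¹ *
          (A.map (algebraMap (ZMod p) (GaloisField p r))) *
          (Matrix.of fun k i : Fin r => (S₁ k) ^ p ^ (i : ℕ)) =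
        Matrix.diagonal (fun i : Fin r => ξ ^ p ^ (i : ℕ)) := by
  classical
  set A' : Matrix (Fin r) (Fin r) (GaloisField p r)
    := A.map (algebraMap (ZMod p) (GaloisField p r)) with hA'def
  -- the left eigenvector (1, ξ, ..., ξ^{r-1})
  have hdet : (A' - ξ • 1).det = 0 := by
    rw [← Matrix.exists_vecMul_eq_zero_iff]
    refine ⟨fun k => ξ ^ (k : ℕ), ?_, ?_⟩
    · intro h
      have : (fun k : Fin r => ξ ^ (k : ℕ)) ⟨0, hr⟩ = 0 := by rw [h]; rfl
      simp at this
    · funext j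
      simp only [Matrix.vecMul, Matrix.sub_apply, Pi.zero_apply, dotProduct,
        Matrix.smul_apply, Matrix.one_apply, smul_eq_mul, mul_sub]
      rw [Finset.sum_sub_distrib]
      have h1 : ∑ k : Fin r, ξ ^ (k : ℕ) * A' k j = ξ * ξ ^ (j : ℕ) := by
        rw [hA j]
        exact Finset.sum_congr rfl fun k _ => by
          simp [hA'def, Matrix.map_apply, mul_comm]
      have h2 : ∑ k : Fin r, ξ ^ (k : ℕ) * (ξ * if k = j then 1 else 0) = ξ * ξ ^ (j : ℕ) := by
        rw [Finset.sum_eq_single j]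
        · simp [mul_comm]
        · intro k _ hk; simp [hk]
        · simp
      rw [h1, h2, sub_self]
  obtain ⟨S₁, hS₁0, hS₁⟩ := Matrix.exists_mulVec_eq_zero_iff.mpr hdet
  have heig : ∀ k, ∑ j, A' k j * S₁ j = ξ * S₁ k := by
    intro k
    have h := congrFun hS₁ k
    simp only [Matrix.mulVec, Matrix.sub_apply, dotProduct, Pi.zero_apply,
      Matrix.smul_apply, Matrix.one_apply, smul_eq_mul, sub_mul] at h
    rw [Finset.sum_sub_distrib, sub_eq_zero] at h
    rw [h, Finset.sum_eq_single k]
    · simp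
    · intro j _ hj; simp [Ne.symm hj]
    · simp
  have heigi : ∀ (i : Fin r) (k : Fin r),
      ∑ j, A' k j * (S₁ j) ^ p ^ (i : ℕ) = ξ ^ p ^ (i : ℕ) * (S₁ k) ^ p ^ (i : ℕ) := by
    intro i k
    have h := congrArg (fun x => x ^ p ^ (i : ℕ)) (heig k)
    simp only [mul_pow] at h
    rw [sum_pow_char_pow] at h
    rw [← h]
    refine Finset.sum_congr rfl fun j _ => ?_
    rw [mul_pow]
    congr 1
    simp only [hA'def, Matrix.map_apply, ← map_pow, ZMod.pow_card_pow]
  -- injectivity of the eigenvalues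
  have hmain : ∀ i j : Fin r, i < j → ξ ^ p ^ (i : ℕ) = ξ ^ p ^ (j : ℕ) → False := by
    intro i j hlt hij
    have hpow : (ξ ^ p ^ ((j : ℕ) - (i : ℕ))) ^ p ^ (i : ℕ) = ξ ^ p ^ (i : ℕ) := by
      rw [← pow_mul, ← pow_add]
      have : (j : ℕ) - (i : ℕ) + (i : ℕ) = (j : ℕ) := by omega
      rw [this, hij]
    have hinj' : Function.Injective fun x : GaloisField p r => x ^ p ^ (i : ℕ) := by
      have := (iterateFrobenius (GaloisField p r) p (i : ℕ)).injective
      exact fun x y h => this (by rw [iterateFrobenius_def, iterateFrobenius_def]; exact h)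
    exact frob_fix_false p r hr ξ hξ _ (by omega) (by omega) (hinj' hpow)
  have hinj : Function.Injective fun i : Fin r => ξ ^ p ^ (i : ℕ) := by
    intro i j hij
    by_contra hne
    rcases Ne.lt_or_gt hne with h | h
    · exact hmain i j h hij
    · exact hmain j i h hij.symm
  -- the eigenvector columns
  set C : Fin r → (Fin r → GaloisField p r) := fun i k => (S₁ k) ^ p ^ (i : ℕ) with hC
  have hCne : ∀ i, C i ≠ 0 := by
    intro i h
    obtain ⟨k, hk⟩ := Function.ne_iff.mp hS₁0
    have h0 : (S₁ k) ^ p ^ (i : ℕ) = 0 := by simpa [hC] using congrFun h k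
    exact hk ((pow_eq_zero_iff (pow_ne_zero (i : ℕ) (Fact.out : p.Prime).pos.ne')).mp h0)
  have hCeig : ∀ i, A'.mulVecLin (C i) = ξ ^ p ^ (i : ℕ) • C i := by
    intro i
    funext k
    simp only [Matrix.mulVecLin_apply, Matrix.mulVec, dotProduct, Pi.smul_apply,
      smul_eq_mul, hC]
    exact heigi i k
  have hLI : LinearIndependent (GaloisField p r) C :=
    Module.End.eigenvectors_linearIndependent' A'.mulVecLin
      (fun i : Fin r => ξ ^ p ^ (i : ℕ)) hinj C
      (fun i => ⟨Module.End.mem_eigenspace_iff.mpr (hCeig i), hCne i⟩)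
  set M : Matrix (Fin r) (Fin r) (GaloisField p r)
    := Matrix.of fun k i : Fin r => (S₁ k) ^ p ^ (i : ℕ) with hM
  have hdetM : M.det ≠ 0 := by
    intro h
    obtain ⟨v, hv0, hv⟩ := Matrix.exists_mulVec_eq_zero_iff.mpr h
    refine hv0 (funext fun i => ?_)
    refine Fintype.linearIndependent_iff.mp hLI v ?_ i
    funext k
    have := congrFun hv k
    simpa [hM, hC, Matrix.mulVec, dotProduct, mul_comm] using this
  have hUnit : IsUnit M := (Matrix.isUnit_iff_isUnit_det M).mpr (isUnit_iff_ne_zero.mpr hdetM)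
  have hAM : A' * M = M * Matrix.diagonal (fun i : Fin r => ξ ^ p ^ (i : ℕ)) := by
    ext k i
    rw [Matrix.mul_apply, Matrix.mul_diagonal]
    simp only [hM, Matrix.of_apply]
    rw [heigi i k, mul_comm]
  exact ⟨S₁, hUnit, by
    rw [Matrix.mul_assoc, hAM, ← Matrix.mul_assoc,
      Matrix.nonsing_inv_mul M ((Matrix.isUnit_iff_isUnit_det M).mp hUnit), Matrix.one_mul]⟩
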